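/- arXiv:1906.10612 — 4 statements merged into one kernel-verified Lean document; each statement's English description precedes it below -/
import Mathlib

section
/- Let γ > 0 and ξ ∈ ℝ. The set of minimizers over w ∈ ℝ of the function w ↦ (1/2)(w − ξ)² + γ·𝟙[w ≠ 0] (where 𝟙[w ≠ 0] is 1 if w ≠ 0 and 0 if w = 0) is exactly {ξ} if |ξ| > √(2γ), exactly {0} if |ξ| < √(2γ), and exactly {0, ξ} if |ξ| = √(2γ). In other words, the proximal operator of the scaled ℓ0 penalty is hard thresholding at level √(2γ). -/
/-- The proximal operator of the scaled ℓ0 penalty is hard thresholding at level √(2γ):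
for γ > 0 and ξ ∈ ℝ, the set of minimizers of w ↦ (1/2)(w − ξ)² + γ·𝟙[w ≠ 0] is
{ξ} if |ξ| > √(2γ), {0} if |ξ| < √(2γ), and {0, ξ} if |ξ| = √(2γ). -/
theorem stmt0 (γ ξ : ℝ) (hγ : 0 < γ) :
    let f : ℝ → ℝ := fun w => (1 / 2) * (w - ξ) ^ 2 + γ * (if w ≠ 0 then 1 else 0)
    (|ξ| > Real.sqrt (2 * γ) → {w : ℝ | ∀ v : ℝ, f w ≤ f v} = {ξ}) ∧
    (|ξ| < Real.sqrt (2 * γ) → {w : ℝ | ∀ v : ℝ, f w ≤ f v} = {0}) ∧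
    (|ξ| = Real.sqrt (2 * γ) → {w : ℝ | ∀ v : ℝ, f w ≤ f v} = {0, ξ}) := by
  intro f
  have hf0 : f 0 = (1/2) * ξ ^ 2 := by simp [f]
  have hfne : ∀ w : ℝ, w ≠ 0 → f w = (1/2) * (w - ξ) ^ 2 + γ := by
    intro w hw; simp [f, hw]
  refine ⟨?_, ?_, ?_⟩
  · intro h
    have h2 : 2 * γ < ξ ^ 2 := by
      have hs : Real.sqrt (2*γ) ^ 2 = 2*γ := Real.sq_sqrt (by positivity)
      have := pow_lt_pow_left₀ h (Real.sqrt_nonneg _) (two_ne_zero)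
      rw [hs, sq_abs] at this
      exact this
    have hξ0 : ξ ≠ 0 := by intro h0; rw [h0] at h2; nlinarith
    ext w
    simp only [Set.mem_setOf_eq, Set.mem_singleton_iff]
    constructor
    · intro hw
      by_cases hw0 : w = 0
      · exfalso
        have := hw ξ
        rw [hw0, hf0, hfne ξ hξ0] at this
        nlinarith
      · have := hw ξ
        rw [hfne w hw0, hfne ξ hξ0] at this
        nlinarith [sq_nonneg (w - ξ)]
    · intro hw v
      rw [hw]
      by_cases hv : v = 0
      · rw [hv, hf0, hfne ξ hξ0]; nlinarith
      · rw [hfne ξ hξ0, hfne v hv]; nlinarith [sq_nonneg (v - ξ)]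
  · intro h
    have h2 : ξ ^ 2 < 2 * γ := by
      have hs : Real.sqrt (2*γ) ^ 2 = 2*γ := Real.sq_sqrt (by positivity)
      have := pow_lt_pow_left₀ h (abs_nonneg _) (two_ne_zero)
      rw [hs, sq_abs] at this
      exact this
    ext w
    simp only [Set.mem_setOf_eq, Set.mem_singleton_iff]
    constructor
    · intro hw
      by_contra hw0
      have := hw 0
      rw [hf0, hfne w hw0] at this
      nlinarith [sq_nonneg (w - ξ)]
    · intro hw v
      rw [hw]
      by_cases hv : v = 0
      · rw [hv]
      · rw [hf0, hfne v hv]; nlinarith [sq_nonneg (v - ξ)]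
  · intro h
    have h2 : ξ ^ 2 = 2 * γ := by
      rw [← sq_abs, h, Real.sq_sqrt (by positivity : (0:ℝ) ≤ 2 * γ)]
    have hξ0 : ξ ≠ 0 := by intro h0; rw [h0] at h2; nlinarith
    ext w
    simp only [Set.mem_setOf_eq, Set.mem_insert_iff, Set.mem_singleton_iff]
    constructor
    · intro hw
      by_cases hw0 : w = 0
      · exact Or.inl hw0
      · right
        have := hw ξ
        rw [hfne w hw0, hfne ξ hξ0] at this
        nlinarith [sq_nonneg (w - ξ)]
    · intro hw v
      have hval : ∀ v : ℝ, (1/2) * ξ ^ 2 ≤ f v := by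
        intro v
        by_cases hv : v = 0
        · rw [hv, hf0]
        · rw [hfne v hv]; nlinarith [sq_nonneg (v - ξ)]
      rcases hw with hw | hw <;> rw [hw]
      · rw [hf0]; exact hval v
      · calc f ξ ≤ (1/2) * ξ^2 := by rw [hfne ξ hξ0]; nlinarith
        _ ≤ f v := hval v
end

section
/- Let Θ be a real m × p matrix, Y ∈ ℝᵐ, ν > 0, and let q(W) = min over ξ ∈ ℝᵖ of (1/2)‖Y − Θξ‖² + (1/(2ν))‖ξ − W‖². Then for all U, W ∈ ℝᵖ, q(U) ≤ q(W) + ⟨∇q(W), U − W⟩ + (1/(2ν))‖U − W‖², where ∇q(W) = (1/ν)(W − ξ*(W)) and ξ*(W) = (ΘᵀΘ + (1/ν)I)⁻¹(ΘᵀY + (1/ν)W). -/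
open Matrix
open scoped RealInnerProductSpace

/-- Descent lemma (quadratic upper bound) for the partially minimized SR3 value
function q(W) = min_ξ (1/2)‖Y − Θξ‖² + (1/(2ν))‖ξ − W‖²: for all U, W,
q(U) ≤ q(W) + ⟨∇q(W), U − W⟩ + (1/(2ν))‖U − W‖², where
∇q(W) = (1/ν)(W − ξ*(W)) and ξ*(W) = (ΘᵀΘ + (1/ν)I)⁻¹(ΘᵀY + (1/ν)W). -/
theorem stmt12 (m p : ℕ) (Θ : Matrix (Fin m) (Fin p) ℝ)
    (Y : EuclideanSpace ℝ (Fin m)) (ν : ℝ) (hν : 0 < ν) :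
    let q : EuclideanSpace ℝ (Fin p) → ℝ := fun W =>
      ⨅ ξ : EuclideanSpace ℝ (Fin p),
        ((1 / 2) * ‖Y - Matrix.toEuclideanLin Θ ξ‖ ^ 2 + (1 / (2 * ν)) * ‖ξ - W‖ ^ 2)
    let ξstar : EuclideanSpace ℝ (Fin p) → EuclideanSpace ℝ (Fin p) := fun W =>
      Matrix.toEuclideanLin ((Θᵀ * Θ + (1 / ν) • (1 : Matrix (Fin p) (Fin p) ℝ))⁻¹)
        (Matrix.toEuclideanLin Θᵀ Y + (1 / ν) • W)
    ∀ U W : EuclideanSpace ℝ (Fin p),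
      q U ≤ q W + ⟪(1 / ν) • (W - ξstar W), U - W⟫ + (1 / (2 * ν)) * ‖U - W‖ ^ 2 := by
  intro q ξstar U W
  set A : Matrix (Fin p) (Fin p) ℝ := Θᵀ * Θ + (1 / ν) • (1 : Matrix (Fin p) (Fin p) ℝ) with hAdef
  have hA : A.PosDef := by
    apply Matrix.PosDef.posSemidef_add
    · rw [← Matrix.conjTranspose_eq_transpose_of_trivial]
      exact Matrix.posSemidef_conjTranspose_mul_self Θ
    · rw [Matrix.smul_one_eq_diagonal]
      exact Matrix.PosDef.diagonal fun _ => by positivity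
  set T : EuclideanSpace ℝ (Fin p) →ₗ[ℝ] EuclideanSpace ℝ (Fin m) := Matrix.toEuclideanLin Θ
    with hT
  set ξs : EuclideanSpace ℝ (Fin p) := ξstar W with hξs
  have hAapp : ∀ x : EuclideanSpace ℝ (Fin p),
      Matrix.toEuclideanLin A x = Matrix.toEuclideanLin Θᵀ (T x) + (1 / ν) • x := by
    intro x
    simp only [hAdef, hT, Matrix.toEuclideanLin_eq_toLin, map_add, _root_.map_smul,
      LinearMap.add_apply, LinearMap.smul_apply, Matrix.toLin_mul _ (PiLp.basisFun 2 ℝ (Fin m)),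
      Matrix.toLin_one, LinearMap.comp_apply, LinearMap.id_apply]
  have hstat : Matrix.toEuclideanLin Θᵀ (T ξs) + (1 / ν) • ξs
      = Matrix.toEuclideanLin Θᵀ Y + (1 / ν) • W := by
    rw [← hAapp]
    show Matrix.toEuclideanLin A (Matrix.toEuclideanLin A⁻¹ _) = _
    simp only [Matrix.toEuclideanLin_eq_toLin, ← LinearMap.comp_apply, ← Matrix.toLin_mul,
      Matrix.mul_nonsing_inv A hA.det_pos.ne'.isUnit, Matrix.toLin_one, LinearMap.id_apply]
  have hadj : ∀ (z : EuclideanSpace ℝ (Fin m)) (h : EuclideanSpace ℝ (Fin p)),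
      ⟪Matrix.toEuclideanLin Θᵀ z, h⟫ = ⟪z, T h⟫ := by
    intro z h
    rw [← Matrix.conjTranspose_eq_transpose_of_trivial,
      Matrix.toEuclideanLin_conjTranspose_eq_adjoint, LinearMap.adjoint_inner_left]
  set f : EuclideanSpace ℝ (Fin p) → EuclideanSpace ℝ (Fin p) → ℝ := fun ξ V =>
    (1 / 2) * ‖Y - T ξ‖ ^ 2 + (1 / (2 * ν)) * ‖ξ - V‖ ^ 2 with hf
  have hbdd : ∀ V, BddBelow (Set.range fun ξ => f ξ V) := by
    intro V
    refine ⟨0, fun x hx => ?_⟩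
    obtain ⟨ξ, rfl⟩ := hx
    have h1 : (0:ℝ) ≤ ‖Y - T ξ‖ ^ 2 := sq_nonneg _
    have h2 : (0:ℝ) ≤ ‖ξ - V‖ ^ 2 := sq_nonneg _
    have h3 : (0:ℝ) < 1 / (2 * ν) := by positivity
    positivity
  -- ξs minimizes f · W
  have hmin : ∀ ξ, f ξs W ≤ f ξ W := by
    intro ξ
    have e1 : ‖Y - T ξ‖ ^ 2
        = ‖Y - T ξs‖ ^ 2 - 2 * ⟪Y - T ξs, T (ξ - ξs)⟫ + ‖T (ξ - ξs)‖ ^ 2 := by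
      rw [show Y - T ξ = (Y - T ξs) - T (ξ - ξs) by rw [map_sub]; abel, @norm_sub_sq_real]
    have e2 : ‖ξ - W‖ ^ 2
        = ‖ξs - W‖ ^ 2 + 2 * ⟪ξs - W, ξ - ξs⟫ + ‖ξ - ξs‖ ^ 2 := by
      rw [show ξ - W = (ξs - W) + (ξ - ξs) by abel, @norm_add_sq_real]
    have hcross : - ⟪Y - T ξs, T (ξ - ξs)⟫ + (1 / ν) * ⟪ξs - W, ξ - ξs⟫ = 0 := by
      have h0 : - ⟪Y - T ξs, T (ξ - ξs)⟫ + (1 / ν) * ⟪ξs - W, ξ - ξs⟫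
          = ⟪(Matrix.toEuclideanLin Θᵀ (T ξs) + (1 / ν) • ξs)
              - (Matrix.toEuclideanLin Θᵀ Y + (1 / ν) • W), ξ - ξs⟫ := by
        simp only [inner_sub_left, inner_add_left, real_inner_smul_left, hadj]
        ring
      rw [h0, hstat, sub_self, inner_zero_left]
    have hn1 : (0:ℝ) ≤ (1 / 2) * ‖T (ξ - ξs)‖ ^ 2 := by positivity
    have hn2 : (0:ℝ) ≤ (1 / (2 * ν)) * ‖ξ - ξs‖ ^ 2 := by positivity
    have hν' : ν ≠ 0 := hν.ne'
    rw [hf]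
    simp only
    rw [e1, e2]
    have hexp : (1 / (2 * ν)) * (‖ξs - W‖ ^ 2 + 2 * ⟪ξs - W, ξ - ξs⟫ + ‖ξ - ξs‖ ^ 2)
        = (1 / (2 * ν)) * ‖ξs - W‖ ^ 2 + (1 / ν) * ⟪ξs - W, ξ - ξs⟫
          + (1 / (2 * ν)) * ‖ξ - ξs‖ ^ 2 := by
      generalize ⟪ξs - W, ξ - ξs⟫ = r
      generalize ‖ξs - W‖ ^ 2 = b
      generalize ‖ξ - ξs‖ ^ 2 = c
      ring
    rw [hexp]
    nlinarith [hcross, hn1, hn2]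
  have hqU : q U ≤ f ξs U := ciInf_le (hbdd U) ξs
  have hqW : f ξs W ≤ q W := le_ciInf hmin
  have e3 : ‖ξs - U‖ ^ 2 = ‖ξs - W‖ ^ 2 - 2 * ⟪ξs - W, U - W⟫ + ‖U - W‖ ^ 2 := by
    rw [show ξs - U = (ξs - W) - (U - W) by abel, @norm_sub_sq_real]
  have hident : f ξs U = f ξs W + ⟪(1 / ν) • (W - ξs), U - W⟫ + (1 / (2 * ν)) * ‖U - W‖ ^ 2 := by
    rw [hf]
    simp only
    rw [e3, real_inner_smul_left, show W - ξs = -(ξs - W) by abel, inner_neg_left]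
    have hν' : ν ≠ 0 := hν.ne'
    generalize ⟪ξs - W, U - W⟫ = r
    generalize ‖Y - T ξs‖ ^ 2 = a
    generalize ‖ξs - W‖ ^ 2 = b
    generalize ‖U - W‖ ^ 2 = c
    ring
  calc q U ≤ f ξs U := hqU
    _ = f ξs W + ⟪(1 / ν) • (W - ξs), U - W⟫ + (1 / (2 * ν)) * ‖U - W‖ ^ 2 := hident
    _ ≤ q W + ⟪(1 / ν) • (W - ξs), U - W⟫ + (1 / (2 * ν)) * ‖U - W‖ ^ 2 := by
        exact add_le_add_left (add_le_add_left hqW _) _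
end

section
/- Let Θ be a real m × p matrix, Y ∈ ℝᵐ, ν > 0, λ > 0, and let R : ℝᵖ → ℝ be convex. Define q(W) = min over ξ ∈ ℝᵖ of (1/2)‖Y − Θξ‖² + (1/(2ν))‖ξ − W‖², p(W) = q(W) + λR(W), and suppose p is bounded below with infimum p*. Let ξ*(W) = (ΘᵀΘ + (1/ν)I)⁻¹(ΘᵀY + (1/ν)W), and consider the SR3 iterates W⁰, W¹, W², ..., where Wᵏ minimizes w ↦ λR(w) + (1/(2ν))‖w − ξ*(Wᵏ⁻¹)‖² (i.e., Wᵏ = prox_{λνR}(ξ*(Wᵏ⁻¹))). Define the gradient mapping Gᵏ = (Wᵏ⁻¹ − Wᵏ)/ν. Then for every N ≥ 1, (1/N)·Σ_{k=1}^{N} ‖Gᵏ‖² ≤ (2/(νN))·(p(W⁰) − p*). In particular, min_{1≤k≤N} ‖Gᵏ‖² → 0 at a sublinear O(1/N) rate. -/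
open Matrix Filter

/-- Strong-convexity inequality for the proximal step: if `x` minimizes
`w ↦ h w + c‖w − ξ‖²` with `h` convex, then the minimum is attained with a
quadratic gap. -/
lemma sr3_prox_strong {E : Type*} [NormedAddCommGroup E] [InnerProductSpace ℝ E]
    (h : E → ℝ) (hconv : ConvexOn ℝ Set.univ h) (c : ℝ)
    (ξ x : E) (hmin : ∀ w, h x + c * ‖x - ξ‖ ^ 2 ≤ h w + c * ‖w - ξ‖ ^ 2)
    (w : E) :
    h x + c * ‖x - ξ‖ ^ 2 + c * ‖w - x‖ ^ 2 ≤ h w + c * ‖w - ξ‖ ^ 2 := by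
  have step : ∀ t : ℝ, 0 < t → t ≤ 1 →
      h x + c * ‖x - ξ‖ ^ 2 + c * (1 - t) * ‖w - x‖ ^ 2 ≤ h w + c * ‖w - ξ‖ ^ 2 := by
    intro t ht0 ht1
    set a := x - ξ with ha
    set b := w - ξ with hb
    have key : ‖(1 - t) • a + t • b‖ ^ 2
        = (1 - t) * ‖a‖ ^ 2 + t * ‖b‖ ^ 2 - t * (1 - t) * ‖b - a‖ ^ 2 := by
      have h1 := norm_add_sq_real ((1 - t) • a) (t • b)
      have h2 := norm_sub_sq_real b a
      rw [norm_smul, norm_smul, real_inner_smul_left, real_inner_smul_right,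
        Real.norm_eq_abs, Real.norm_eq_abs, abs_of_nonneg (by linarith),
        abs_of_nonneg ht0.le] at h1
      have h3 : (inner ℝ b a : ℝ) = inner ℝ a b := (real_inner_comm b a).symm
      linear_combination h1 + t * (1 - t) * h2 - 2 * t * (1 - t) * h3
    have hcomb : (1 - t) • x + t • w - ξ = (1 - t) • a + t • b := by
      rw [ha, hb]; module
    have hcv := hconv.2 (Set.mem_univ x) (Set.mem_univ w)
      (by linarith : (0:ℝ) ≤ 1 - t) ht0.le (by ring)
    simp only [smul_eq_mul] at hcv
    have hm := hmin ((1 - t) • x + t • w)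
    rw [hcomb, key] at hm
    have hba : b - a = w - x := by rw [ha, hb]; abel
    rw [← hba]
    nlinarith [hm, hcv, ht0, sq_nonneg ‖w - x‖]
  have hlim : Tendsto (fun n : ℕ => h x + c * ‖x - ξ‖ ^ 2
      + c * (1 - 1 / (n + 1 : ℝ)) * ‖w - x‖ ^ 2) atTop
      (nhds (h x + c * ‖x - ξ‖ ^ 2 + c * ‖w - x‖ ^ 2)) := by
    have h0 : Tendsto (fun n : ℕ => 1 / (n + 1 : ℝ)) atTop (nhds 0) :=
      tendsto_one_div_add_atTop_nhds_zero_nat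
    have := ((h0.const_sub 1).const_mul c).mul_const (‖w - x‖ ^ 2)
    simp only [sub_zero, mul_one] at this
    simpa using (tendsto_const_nhds.add this)
  refine le_of_tendsto' hlim fun n => ?_
  have hn0 : (0:ℝ) < 1 / (n + 1 : ℝ) := by positivity
  have hn1 : 1 / (n + 1 : ℝ) ≤ 1 := by
    rw [div_le_one (by positivity)]; linarith [Nat.cast_nonneg (α := ℝ) n]
  exact step _ hn0 hn1

/-- First-order optimality: a critical point of the ridge objective is a global
minimizer. -/
lemma sr3_opt {m p : ℕ} (Y : EuclideanSpace ℝ (Fin m)) (ν : ℝ) (hν : 0 < ν)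
    (T : EuclideanSpace ℝ (Fin p) →ₗ[ℝ] EuclideanSpace ℝ (Fin m))
    (S : EuclideanSpace ℝ (Fin m) →ₗ[ℝ] EuclideanSpace ℝ (Fin p))
    (hadj : ∀ (x : EuclideanSpace ℝ (Fin p)) (y : EuclideanSpace ℝ (Fin m)),
      (inner ℝ (T x) y : ℝ) = inner ℝ x (S y))
    (V ξ₀ : EuclideanSpace ℝ (Fin p))
    (hcrit : S (T ξ₀) + (1 / ν) • ξ₀ = S Y + (1 / ν) • V)
    (ξ : EuclideanSpace ℝ (Fin p)) :
    (1 / 2) * ‖Y - T ξ₀‖ ^ 2 + (1 / (2 * ν)) * ‖ξ₀ - V‖ ^ 2 ≤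
      (1 / 2) * ‖Y - T ξ‖ ^ 2 + (1 / (2 * ν)) * ‖ξ - V‖ ^ 2 := by
  set d := ξ - ξ₀ with hd
  have h1 : Y - T ξ = (Y - T ξ₀) - T d := by rw [hd, map_sub]; abel
  have h2 : ξ - V = (ξ₀ - V) + d := by rw [hd]; abel
  have e1 : ‖Y - T ξ‖ ^ 2
      = ‖Y - T ξ₀‖ ^ 2 - 2 * inner ℝ (Y - T ξ₀) (T d) + ‖T d‖ ^ 2 := by
    rw [h1]; exact norm_sub_sq_real _ _
  have e2 : ‖ξ - V‖ ^ 2 = ‖ξ₀ - V‖ ^ 2 + 2 * inner ℝ (ξ₀ - V) d + ‖d‖ ^ 2 := by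
    rw [h2]; exact norm_add_sq_real _ _
  have e3 : (inner ℝ (Y - T ξ₀) (T d) : ℝ) = inner ℝ (S (Y - T ξ₀)) d := by
    rw [real_inner_comm, hadj, real_inner_comm]
  have e4 : S (Y - T ξ₀) = (1 / ν) • (ξ₀ - V) := by
    rw [map_sub]
    have h5 : S (T ξ₀) = S Y + (1 / ν) • V - (1 / ν) • ξ₀ := by
      rw [← hcrit]; abel
    rw [h5, smul_sub]; module
  have I1 : (inner ℝ (Y - T ξ₀) (T d) : ℝ) = (1 / ν) * inner ℝ (ξ₀ - V) d := by
    rw [e3, e4, real_inner_smul_left]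
  rw [e1, e2, I1]
  set J : ℝ := inner ℝ (ξ₀ - V) d with hJ
  have h2ν' : (0:ℝ) < 1 / (2 * ν) := by positivity
  have hc : 1 / (2 * ν) * (2 * J) - 1 / ν * J = 0 := by field_simp; ring
  nlinarith [hc, mul_nonneg h2ν'.le (sq_nonneg ‖d‖), sq_nonneg ‖T d‖,
    mul_nonneg h2ν'.le (sq_nonneg ‖T d‖)]

set_option maxHeartbeats 1000000 in
/-- Sublinear convergence of the SR3 proximal gradient iteration: with
q(W) = min_ξ (1/2)‖Y − Θξ‖² + (1/(2ν))‖ξ − W‖², P(W) = q(W) + λR(W) bounded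
below with infimum P*, ξ*(W) = (ΘᵀΘ + (1/ν)I)⁻¹(ΘᵀY + (1/ν)W), and iterates
Wᵏ⁺¹ = prox_{λνR}(ξ*(Wᵏ)), the gradient mappings Gᵏ⁺¹ = (Wᵏ − Wᵏ⁺¹)/ν satisfy
(1/N)·Σ_{k<N} ‖Gᵏ⁺¹‖² ≤ (2/(νN))·(P(W⁰) − P*) for every N ≥ 1. -/
theorem stmt13 (m p : ℕ) (Θ : Matrix (Fin m) (Fin p) ℝ)
    (Y : EuclideanSpace ℝ (Fin m)) (ν lam : ℝ) (hν : 0 < ν) (hlam : 0 < lam)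
    (R : EuclideanSpace ℝ (Fin p) → ℝ) (hR : ConvexOn ℝ Set.univ R)
    (q P : EuclideanSpace ℝ (Fin p) → ℝ)
    (hq : ∀ W, q W = ⨅ ξ : EuclideanSpace ℝ (Fin p),
      ((1 / 2) * ‖Y - Matrix.toEuclideanLin Θ ξ‖ ^ 2 + (1 / (2 * ν)) * ‖ξ - W‖ ^ 2))
    (hP : ∀ W, P W = q W + lam * R W)
    (Pstar : ℝ) (hPstar : IsGLB (Set.range P) Pstar)
    (ξstar : EuclideanSpace ℝ (Fin p) → EuclideanSpace ℝ (Fin p))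
    (hξstar : ∀ W, ξstar W =
      Matrix.toEuclideanLin ((Θᵀ * Θ + (1 / ν) • (1 : Matrix (Fin p) (Fin p) ℝ))⁻¹)
        (Matrix.toEuclideanLin Θᵀ Y + (1 / ν) • W))
    (W : ℕ → EuclideanSpace ℝ (Fin p))
    -- Wᵏ⁺¹ minimizes w ↦ λR(w) + (1/(2ν))‖w − ξ*(Wᵏ)‖², i.e. Wᵏ⁺¹ = prox_{λνR}(ξ*(Wᵏ))
    (hW : ∀ k : ℕ, ∀ w : EuclideanSpace ℝ (Fin p),
      lam * R (W (k + 1)) + (1 / (2 * ν)) * ‖W (k + 1) - ξstar (W k)‖ ^ 2 ≤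
      lam * R w + (1 / (2 * ν)) * ‖w - ξstar (W k)‖ ^ 2) :
    ∀ N : ℕ, 1 ≤ N →
      (1 / (N : ℝ)) * ∑ k ∈ Finset.range N, ‖(1 / ν) • (W k - W (k + 1))‖ ^ 2 ≤
        (2 / (ν * N)) * (P (W 0) - Pstar) := by
  intro N hN
  classical
  set A : Matrix (Fin p) (Fin p) ℝ := Θᵀ * Θ + (1 / ν) • (1 : Matrix (Fin p) (Fin p) ℝ)
    with hAdef
  have hTt : Θᵀ = Θᴴ := by
    ext i j; simp [Matrix.conjTranspose_apply]
  have hIdPD : ((1 / ν) • (1 : Matrix (Fin p) (Fin p) ℝ)).PosDef := by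
    constructor
    · simp [Matrix.IsHermitian, Matrix.conjTranspose_smul]
    · exact (Matrix.PosDef.one.smul (by positivity : (0:ℝ) < 1 / ν)).2
  have hAPD : A.PosDef := by
    rw [hAdef, hTt]
    exact Matrix.PosDef.posSemidef_add (Matrix.posSemidef_conjTranspose_mul_self Θ) hIdPD
  have hinv : A * A⁻¹ = 1 := Matrix.mul_nonsing_inv A hAPD.det_pos.ne'.isUnit
  set T := Matrix.toEuclideanLin Θ with hTdef
  set S := Matrix.toEuclideanLin Θᵀ with hSdef
  have hadj : ∀ (x : EuclideanSpace ℝ (Fin p)) (y : EuclideanSpace ℝ (Fin m)),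
      (inner ℝ (T x) y : ℝ) = inner ℝ x (S y) := by
    intro x y
    rw [hSdef, hTt, Matrix.toEuclideanLin_conjTranspose_eq_adjoint]
    exact (LinearMap.adjoint_inner_right T x y).symm
  have hAinv : ∀ v : EuclideanSpace ℝ (Fin p),
      Matrix.toEuclideanLin A (Matrix.toEuclideanLin A⁻¹ v) = v := by
    intro v
    rw [Matrix.toEuclideanLin_apply, Matrix.toEuclideanLin_apply]
    simp [Matrix.mulVec_mulVec, hinv]
  have hsplit : ∀ x : EuclideanSpace ℝ (Fin p),
      Matrix.toEuclideanLin A x = S (T x) + (1 / ν) • x := by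
    intro x
    rw [hAdef, hSdef, hTdef, Matrix.toEuclideanLin_apply, Matrix.toEuclideanLin_apply,
      Matrix.toEuclideanLin_apply]
    simp [Matrix.add_mulVec, Matrix.mulVec_mulVec, Matrix.smul_mulVec,
      Matrix.one_mulVec]
  have hcrit : ∀ V, S (T (ξstar V)) + (1 / ν) • (ξstar V) = S Y + (1 / ν) • V := by
    intro V
    have h0 := hAinv (S Y + (1 / ν) • V)
    rw [hsplit] at h0
    rw [hξstar V]
    exact h0
  -- optimality of ξ*
  have hopt : ∀ V ξ : EuclideanSpace ℝ (Fin p),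
      (1 / 2) * ‖Y - T (ξstar V)‖ ^ 2 + (1 / (2 * ν)) * ‖ξstar V - V‖ ^ 2 ≤
      (1 / 2) * ‖Y - T ξ‖ ^ 2 + (1 / (2 * ν)) * ‖ξ - V‖ ^ 2 :=
    fun V ξ => sr3_opt Y ν hν T S hadj V (ξstar V) (hcrit V) ξ
  -- value of q
  have hqeq : ∀ V, q V
      = (1 / 2) * ‖Y - T (ξstar V)‖ ^ 2 + (1 / (2 * ν)) * ‖ξstar V - V‖ ^ 2 := by
    intro V
    rw [hq V]
    refine le_antisymm (ciInf_le ⟨(1 / 2) * ‖Y - T (ξstar V)‖ ^ 2 + (1 / (2 * ν)) * ‖ξstar V - V‖ ^ 2, ?_⟩ (ξstar V)) (le_ciInf (hopt V))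
    rintro y ⟨ξ, rfl⟩
    exact hopt V ξ
  have hqle : ∀ V ξ, q V
      ≤ (1 / 2) * ‖Y - T ξ‖ ^ 2 + (1 / (2 * ν)) * ‖ξ - V‖ ^ 2 := by
    intro V ξ
    rw [hqeq V]
    exact hopt V ξ
  -- descent
  have hconvlam : ConvexOn ℝ Set.univ (fun w => lam * R w) := hR.smul hlam.le
  have hdescent : ∀ k, P (W (k + 1)) + (1 / (2 * ν)) * ‖W k - W (k + 1)‖ ^ 2 ≤ P (W k) := by
    intro k
    have hstrong := sr3_prox_strong (fun w => lam * R w) hconvlam (1 / (2 * ν))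
      (ξstar (W k)) (W (k + 1)) (hW k) (W k)
    have hq1 := hqle (W (k + 1)) (ξstar (W k))
    have hq0 := hqeq (W k)
    rw [norm_sub_rev (ξstar (W k)) (W (k + 1))] at hq1
    rw [norm_sub_rev (ξstar (W k)) (W k)] at hq0
    rw [hP, hP]
    linarith [hstrong, hq1, hq0.le, hq0.ge]
  -- telescoping
  have hPl : ∀ n, Pstar ≤ P (W n) := fun n => hPstar.1 ⟨W n, rfl⟩
  have htel : ∀ n : ℕ,
      ∑ k ∈ Finset.range n, (1 / (2 * ν)) * ‖W k - W (k + 1)‖ ^ 2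
        ≤ P (W 0) - P (W n) := by
    intro n
    induction n with
    | zero => simp
    | succ n ih =>
      rw [Finset.sum_range_succ]
      linarith [hdescent n]
  have hsum : ∑ k ∈ Finset.range N, ‖W k - W (k + 1)‖ ^ 2
      ≤ 2 * ν * (P (W 0) - Pstar) := by
    have h2 : (1 / (2 * ν)) * ∑ k ∈ Finset.range N, ‖W k - W (k + 1)‖ ^ 2
        ≤ P (W 0) - Pstar := by
      rw [Finset.mul_sum]
      linarith [htel N, hPl N]
    have h3 := mul_le_mul_of_nonneg_left h2 (by positivity : (0:ℝ) ≤ 2 * ν)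
    calc ∑ k ∈ Finset.range N, ‖W k - W (k + 1)‖ ^ 2
        = (2 * ν) * ((1 / (2 * ν)) * ∑ k ∈ Finset.range N, ‖W k - W (k + 1)‖ ^ 2) := by
          field_simp
      _ ≤ 2 * ν * (P (W 0) - Pstar) := h3
  -- conclusion
  have hterm : ∀ k : ℕ, ‖(1 / ν) • (W k - W (k + 1))‖ ^ 2
      = (1 / ν) ^ 2 * ‖W k - W (k + 1)‖ ^ 2 := by
    intro k
    rw [norm_smul, Real.norm_eq_abs, abs_of_pos (by positivity), mul_pow]
  rw [Finset.sum_congr rfl (fun k _ => hterm k), ← Finset.mul_sum]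
  have hNpos : (0:ℝ) < N := by exact_mod_cast Nat.cast_pos.mpr hN
  have hfac : (0:ℝ) ≤ (1 / (N : ℝ)) * (1 / ν) ^ 2 := by positivity
  have h4 := mul_le_mul_of_nonneg_left hsum hfac
  calc (1 / (N : ℝ)) * ((1 / ν) ^ 2 * ∑ k ∈ Finset.range N, ‖W k - W (k + 1)‖ ^ 2)
      = (1 / (N : ℝ)) * (1 / ν) ^ 2 * ∑ k ∈ Finset.range N, ‖W k - W (k + 1)‖ ^ 2 := by
        ring
    _ ≤ (1 / (N : ℝ)) * (1 / ν) ^ 2 * (2 * ν * (P (W 0) - Pstar)) := h4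
    _ = (2 / (ν * N)) * (P (W 0) - Pstar) := by field_simp
end

section
/- Let Θ be a real m × p matrix, Y ∈ ℝᵐ, ν > 0, λ > 0, and let R : ℝᵖ → ℝ be convex. Define q(W) = min over ξ ∈ ℝᵖ of (1/2)‖Y − Θξ‖² + (1/(2ν))‖ξ − W‖², p(W) = q(W) + λR(W), and ξ*(W) = (ΘᵀΘ + (1/ν)I)⁻¹(ΘᵀY + (1/ν)W). For any W ∈ ℝᵖ, let W⁺ be the unique minimizer of w ↦ λR(w) + (1/(2ν))‖w − ξ*(W)‖². Then p(W⁺) ≤ p(W) − (1/(2ν))‖W⁺ − W‖². -/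
open Matrix RealInnerProductSpace

open RealInnerProductSpace in
private lemma sr3_combo_norm {E : Type*} [NormedAddCommGroup E] [InnerProductSpace ℝ E]
    (u v : E) (t : ℝ) :
    ‖(1 - t) • u + t • v‖ ^ 2 = (1 - t) * ‖u‖ ^ 2 + t * ‖v‖ ^ 2 - t * (1 - t) * ‖u - v‖ ^ 2 := by
  have h : ∀ x : E, ‖x‖ ^ 2 = ⟪x, x⟫ := fun x => (real_inner_self_eq_norm_sq x).symm
  simp only [h, inner_add_left, inner_add_right, inner_sub_left, inner_sub_right,
    real_inner_smul_left, real_inner_smul_right]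
  rw [real_inner_comm v u]
  ring

set_option maxHeartbeats 1000000 in
/-- Per-iteration sufficient decrease for SR3: with
q(W) = min_ξ (1/2)‖Y − Θξ‖² + (1/(2ν))‖ξ − W‖², P(W) = q(W) + λR(W),
ξ*(W) = (ΘᵀΘ + (1/ν)I)⁻¹(ΘᵀY + (1/ν)W), and W⁺ the (unique) minimizer of
w ↦ λR(w) + (1/(2ν))‖w − ξ*(W)‖², we have P(W⁺) ≤ P(W) − (1/(2ν))‖W⁺ − W‖². -/
theorem stmt14 (m p : ℕ) (Θ : Matrix (Fin m) (Fin p) ℝ)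
    (Y : EuclideanSpace ℝ (Fin m)) (ν lam : ℝ) (hν : 0 < ν) (hlam : 0 < lam)
    (R : EuclideanSpace ℝ (Fin p) → ℝ) (hR : ConvexOn ℝ Set.univ R)
    (q P : EuclideanSpace ℝ (Fin p) → ℝ)
    (hq : ∀ W, q W = ⨅ ξ : EuclideanSpace ℝ (Fin p),
      ((1 / 2) * ‖Y - Matrix.toEuclideanLin Θ ξ‖ ^ 2 + (1 / (2 * ν)) * ‖ξ - W‖ ^ 2))
    (hP : ∀ W, P W = q W + lam * R W)
    (ξstar : EuclideanSpace ℝ (Fin p) → EuclideanSpace ℝ (Fin p))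
    (hξstar : ∀ W, ξstar W =
      Matrix.toEuclideanLin ((Θᵀ * Θ + (1 / ν) • (1 : Matrix (Fin p) (Fin p) ℝ))⁻¹)
        (Matrix.toEuclideanLin Θᵀ Y + (1 / ν) • W))
    (W Wplus : EuclideanSpace ℝ (Fin p))
    (hWplus : ∀ w : EuclideanSpace ℝ (Fin p),
      lam * R Wplus + (1 / (2 * ν)) * ‖Wplus - ξstar W‖ ^ 2 ≤
      lam * R w + (1 / (2 * ν)) * ‖w - ξstar W‖ ^ 2) :
    P Wplus ≤ P W - (1 / (2 * ν)) * ‖Wplus - W‖ ^ 2 := by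
  -- notation
  set A : Matrix (Fin p) (Fin p) ℝ := Θᵀ * Θ + (1 / ν) • (1 : Matrix (Fin p) (Fin p) ℝ)
    with hAdef
  set ξs : EuclideanSpace ℝ (Fin p) := ξstar W with hξsdef
  -- Step 1 : the matrix A is positive definite, hence invertible
  have hsd : (Θᵀ * Θ).PosSemidef := by
    simpa [Matrix.conjTranspose_eq_transpose_of_trivial] using
      Matrix.posSemidef_conjTranspose_mul_self Θ
  have hd : ((1 / ν) • (1 : Matrix (Fin p) (Fin p) ℝ)).PosDef := by
    rw [Matrix.smul_one_eq_diagonal]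
    exact Matrix.posDef_diagonal_iff.mpr fun _ => by positivity
  have hA : A.PosDef := Matrix.PosDef.posSemidef_add hsd hd
  have hdet : IsUnit A.det := hA.det_pos.ne'.isUnit
  have hcomp : ∀ {a b c : ℕ} (M : Matrix (Fin a) (Fin b) ℝ) (N : Matrix (Fin b) (Fin c) ℝ)
      (x : EuclideanSpace ℝ (Fin c)),
      Matrix.toEuclideanLin M (Matrix.toEuclideanLin N x) = Matrix.toEuclideanLin (M * N) x := by
    intro a b c M N x
    simp [Matrix.toEuclideanLin_apply, Matrix.mulVec_mulVec]
  -- Step 2 : stationarity of ξ*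
  have hstat : Matrix.toEuclideanLin A ξs = Matrix.toEuclideanLin Θᵀ Y + (1 / ν) • W := by
    rw [hξsdef, hξstar W, hcomp, Matrix.mul_nonsing_inv _ hdet]
    simp [Matrix.toEuclideanLin_apply, Matrix.one_mulVec]
  have hone : ∀ x : EuclideanSpace ℝ (Fin p),
      Matrix.toEuclideanLin ((1 / ν) • (1 : Matrix (Fin p) (Fin p) ℝ)) x = (1 / ν) • x := by
    intro x
    simp [Matrix.toEuclideanLin_apply, Matrix.smul_mulVec, Matrix.one_mulVec,
      WithLp.toLp_smul]
  have hexp : Matrix.toEuclideanLin A ξs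
      = Matrix.toEuclideanLin Θᵀ (Matrix.toEuclideanLin Θ ξs) + (1 / ν) • ξs := by
    conv_lhs => rw [hAdef, map_add, LinearMap.add_apply]
    rw [hone, ← hcomp]
  have hkey : Matrix.toEuclideanLin Θᵀ (Y - Matrix.toEuclideanLin Θ ξs)
      = (1 / ν) • (ξs - W) := by
    have h2 : Matrix.toEuclideanLin Θᵀ (Matrix.toEuclideanLin Θ ξs) + (1 / ν) • ξs
        = Matrix.toEuclideanLin Θᵀ Y + (1 / ν) • W := by rw [← hexp, hstat]
    rw [map_sub, smul_sub, sub_eq_sub_iff_add_eq_add, ← h2]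
    abel
  -- Step 3 : adjoint identity
  have hadj : ∀ (y : EuclideanSpace ℝ (Fin m)) (x : EuclideanSpace ℝ (Fin p)),
      ⟪Matrix.toEuclideanLin Θᵀ y, x⟫ = ⟪y, Matrix.toEuclideanLin Θ x⟫ := by
    intro y x
    rw [← Matrix.conjTranspose_eq_transpose_of_trivial Θ,
      Matrix.toEuclideanLin_conjTranspose_eq_adjoint, LinearMap.adjoint_inner_left]
  -- Step 4 : ξ* minimizes ξ ↦ (1/2)‖Y − Θξ‖² + (1/(2ν))‖ξ − W‖²
  have hmin : ∀ ξ : EuclideanSpace ℝ (Fin p),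
      (1 / 2) * ‖Y - Matrix.toEuclideanLin Θ ξs‖ ^ 2 + (1 / (2 * ν)) * ‖ξs - W‖ ^ 2 ≤
      (1 / 2) * ‖Y - Matrix.toEuclideanLin Θ ξ‖ ^ 2 + (1 / (2 * ν)) * ‖ξ - W‖ ^ 2 := by
    intro ξ
    have hd1 : Y - Matrix.toEuclideanLin Θ ξ
        = (Y - Matrix.toEuclideanLin Θ ξs) - Matrix.toEuclideanLin Θ (ξ - ξs) := by
      rw [map_sub]; abel
    have hd2 : ξ - W = (ξs - W) + (ξ - ξs) := by abel
    have hip : ⟪Y - Matrix.toEuclideanLin Θ ξs, Matrix.toEuclideanLin Θ (ξ - ξs)⟫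
        = (1 / ν) * ⟪ξs - W, ξ - ξs⟫ := by
      rw [← hadj, hkey, real_inner_smul_left]
    have eA : ‖Y - Matrix.toEuclideanLin Θ ξ‖ ^ 2
        = ‖Y - Matrix.toEuclideanLin Θ ξs‖ ^ 2 - 2 * ((1 / ν) * ⟪ξs - W, ξ - ξs⟫)
          + ‖Matrix.toEuclideanLin Θ (ξ - ξs)‖ ^ 2 := by
      rw [hd1, norm_sub_sq_real, hip]
    have eB : ‖ξ - W‖ ^ 2
        = ‖ξs - W‖ ^ 2 + 2 * ⟪ξs - W, ξ - ξs⟫ + ‖ξ - ξs‖ ^ 2 := by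
      rw [hd2, norm_add_sq_real]
    rw [eA, eB]
    have key : ∀ X Z U V a : ℝ, 0 ≤ U → 0 ≤ V →
        (1 / 2) * X + (1 / (2 * ν)) * Z ≤
        (1 / 2) * (X - 2 * ((1 / ν) * a) + U) + (1 / (2 * ν)) * (Z + 2 * a + V) := by
      intro X Z U V a hU hV
      have h : (1 / 2) * (X - 2 * ((1 / ν) * a) + U) + (1 / (2 * ν)) * (Z + 2 * a + V)
          = (1 / 2) * X + (1 / (2 * ν)) * Z + ((1 / 2) * U + (1 / (2 * ν)) * V) := by
        field_simp
        ring
      have h2 : 0 ≤ (1 / 2) * U + (1 / (2 * ν)) * V := by positivity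
      linarith [h]
    exact key _ _ _ _ _ (sq_nonneg _) (sq_nonneg _)
  -- Step 5 : value of q at W and bound at Wplus
  have hbdd : ∀ W' : EuclideanSpace ℝ (Fin p), BddBelow (Set.range fun ξ : EuclideanSpace ℝ (Fin p) =>
      (1 / 2) * ‖Y - Matrix.toEuclideanLin Θ ξ‖ ^ 2 + (1 / (2 * ν)) * ‖ξ - W'‖ ^ 2) := by
    intro W'
    refine ⟨0, ?_⟩
    rintro x ⟨ξ, rfl⟩
    positivity
  have hqW : q W = (1 / 2) * ‖Y - Matrix.toEuclideanLin Θ ξs‖ ^ 2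
      + (1 / (2 * ν)) * ‖ξs - W‖ ^ 2 := by
    rw [hq W]
    exact le_antisymm (ciInf_le (hbdd W) ξs) (le_ciInf hmin)
  have hqWp : q Wplus ≤ (1 / 2) * ‖Y - Matrix.toEuclideanLin Θ ξs‖ ^ 2
      + (1 / (2 * ν)) * ‖ξs - Wplus‖ ^ 2 := by
    rw [hq Wplus]
    exact ciInf_le (hbdd Wplus) ξs
  -- Step 6 : strong convexity of the prox objective
  have hsc : lam * R Wplus + (1 / (2 * ν)) * ‖Wplus - ξs‖ ^ 2
      + (1 / (2 * ν)) * ‖Wplus - W‖ ^ 2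
      ≤ lam * R W + (1 / (2 * ν)) * ‖W - ξs‖ ^ 2 := by
    have main : ∀ t : ℝ, 0 < t → t < 1 →
        lam * R Wplus + (1 / (2 * ν)) * ‖Wplus - ξs‖ ^ 2
          + (1 / (2 * ν)) * ‖Wplus - W‖ ^ 2
        ≤ lam * R W + (1 / (2 * ν)) * ‖W - ξs‖ ^ 2
          + (1 / (2 * ν)) * ‖Wplus - W‖ ^ 2 * t := by
      intro t ht0 ht1
      set w : EuclideanSpace ℝ (Fin p) := (1 - t) • Wplus + t • W with hwdef
      have hwv : w - ξs = (1 - t) • (Wplus - ξs) + t • (W - ξs) := by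
        rw [hwdef, smul_sub, smul_sub]
        module
      have hRw : R w ≤ (1 - t) * R Wplus + t * R W := by
        have := hR.2 (Set.mem_univ Wplus) (Set.mem_univ W)
          (by linarith : (0:ℝ) ≤ 1 - t) ht0.le (by ring)
        simpa [smul_eq_mul] using this
      have hnw : ‖w - ξs‖ ^ 2 = (1 - t) * ‖Wplus - ξs‖ ^ 2 + t * ‖W - ξs‖ ^ 2
          - t * (1 - t) * ‖Wplus - W‖ ^ 2 := by
        rw [hwv, sr3_combo_norm,
          show (Wplus - ξs) - (W - ξs) = Wplus - W from by abel]
      have h0 := hWplus w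
      rw [hnw] at h0
      have h1 : lam * R w ≤ lam * ((1 - t) * R Wplus + t * R W) :=
        mul_le_mul_of_nonneg_left hRw hlam.le
      have hmul : t * (lam * R Wplus + (1 / (2 * ν)) * ‖Wplus - ξs‖ ^ 2
            + (1 / (2 * ν)) * ‖Wplus - W‖ ^ 2)
          ≤ t * (lam * R W + (1 / (2 * ν)) * ‖W - ξs‖ ^ 2
            + (1 / (2 * ν)) * ‖Wplus - W‖ ^ 2 * t) := by linarith [h0, h1]
      exact (mul_le_mul_iff_right₀ ht0).mp hmul
    refine le_of_forall_pos_le_add ?_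
    intro ε hε
    have hc0 : (0:ℝ) < 1 / (2 * ν) := by positivity
    set K : ℝ := (1 / (2 * ν)) * ‖Wplus - W‖ ^ 2 with hKdef
    have hK0 : 0 ≤ K := by positivity
    have hK1 : (0:ℝ) < K + 1 := by linarith
    set t : ℝ := min (1 / 2) (ε / (K + 1)) with htdef
    have ht0 : 0 < t := lt_min (by norm_num) (div_pos hε hK1)
    have ht1 : t < 1 := lt_of_le_of_lt (min_le_left _ _) (by norm_num)
    have htle : t ≤ ε / (K + 1) := min_le_right _ _
    have hKt : K * t ≤ ε := by
      have h1 : K * t ≤ K * (ε / (K + 1)) := mul_le_mul_of_nonneg_left htle hK0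
      have h2 : K * (ε / (K + 1)) ≤ ε := by
        rw [show K * (ε / (K + 1)) = ε * (K / (K + 1)) from by ring]
        calc ε * (K / (K + 1)) ≤ ε * 1 :=
              mul_le_mul_of_nonneg_left (by rw [div_le_one hK1]; linarith) hε.le
          _ = ε := mul_one ε
      linarith
    have hmain := main t ht0 ht1
    have hKt' : (1 / (2 * ν)) * ‖Wplus - W‖ ^ 2 * t ≤ ε := by
      rw [show (1 / (2 * ν)) * ‖Wplus - W‖ ^ 2 * t = K * t from by rw [hKdef]]
      exact hKt
    linarith [hmain, hKt']
  -- Step 7 : combine everything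
  have e1 : ‖ξs - Wplus‖ ^ 2 = ‖Wplus - ξs‖ ^ 2 := by rw [norm_sub_rev]
  have e2 : ‖ξs - W‖ ^ 2 = ‖W - ξs‖ ^ 2 := by rw [norm_sub_rev]
  rw [hP Wplus, hP W, hqW]
  rw [e2]
  rw [e1] at hqWp
  linarith [hqWp, hsc]
end
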